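/- Let M be the (n+1)×(n+1) matrix with entries M(i,j) = binomial(i+j, j) - δ_{i,j+1} (Kronecker delta), 0 ≤ i,j ≤ n. Let S be the matrix with entries given by the coefficients of 1/((1-xy)(1-x-y)), i.e., S(i,j) = ∑_{m=0}^{min(i,j)} binomial(i+j-2m, i-m). Then det M = det S for every n. -/
import Mathlib

/-- The entries of the matrix `S` as a function on naturals. -/
def robbinsS (i j : ℕ) : ℤ :=
  ∑ m ∈ Finset.range (min i j + 1), (Nat.choose (i + j - 2 * m) (i - m) : ℤ)

lemma robbinsS_zero_left (j : ℕ) : robbinsS 0 j = 1 := by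
  simp [robbinsS]

lemma robbinsS_zero_right (i : ℕ) : robbinsS i 0 = 1 := by
  simp [robbinsS]

lemma robbinsS_one_left (j : ℕ) :
    robbinsS 1 j = (j : ℤ) + 2 - (if j = 0 then 1 else 0) := by
  cases j with
  | zero => simp [robbinsS]
  | succ j' =>
      have hmin : min 1 (j' + 1) = 1 := by omega
      simp only [robbinsS, hmin, Finset.sum_range_succ, Finset.sum_range_one]
      have h0 : 1 + (j' + 1) - 2 * 0 = j' + 2 := by omega
      have h0' : 1 - 0 = 1 := by omega
      have h1 : 1 + (j' + 1) - 2 * 1 = j' := by omega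
      have h1' : 1 - 1 = 0 := by omega
      rw [h0, h0', h1, h1', Nat.choose_one_right, Nat.choose_zero_right]
      have : j' + 1 ≠ 0 := by omega
      rw [if_neg this]
      push_cast
      ring

lemma robbinsS_succ_succ (i j : ℕ) :
    robbinsS (i + 1) (j + 1) = (Nat.choose (i + j + 2) (j + 1) : ℤ) + robbinsS i j := by
  have hmin : min (i + 1) (j + 1) + 1 = (min i j + 1) + 1 := by omega
  rw [robbinsS, hmin, Finset.sum_range_succ']
  have h0 : (i + 1) + (j + 1) - 2 * 0 = i + j + 2 := by omega
  have h0' : (i + 1) - 0 = i + 1 := by omega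
  have hsym : Nat.choose (i + j + 2) (i + 1) = Nat.choose (i + j + 2) (j + 1) := by
    have h := Nat.choose_symm (show j + 1 ≤ i + j + 2 by omega)
    rw [show i + j + 2 - (j + 1) = i + 1 by omega] at h
    exact h
  rw [h0, h0', hsym, add_comm]
  congr 1
  rw [robbinsS]
  apply Finset.sum_congr rfl
  intro m hm
  have hm' : m ≤ min i j := by
    simpa [Nat.lt_succ_iff] using hm
  have e1 : (i + 1) + (j + 1) - 2 * (m + 1) = i + j - 2 * m := by omega
  have e2 : (i + 1) - (m + 1) = i - m := by omega
  rw [e1, e2]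

lemma robbinsS_key (i j : ℕ) :
    robbinsS (i + 2) j - robbinsS (i + 1) j + robbinsS i j =
      (Nat.choose (i + 2 + j) j : ℤ) - (if i + 2 = j + 1 then 1 else 0) := by
  induction j generalizing i with
  | zero =>
      rw [robbinsS_zero_right, robbinsS_zero_right, robbinsS_zero_right,
        Nat.choose_zero_right, if_neg (by omega : ¬ i + 2 = 0 + 1)]
      norm_num
  | succ j' ih =>
      cases i with
      | zero =>
          simp only [Nat.zero_add]
          have h2 := robbinsS_succ_succ 1 j'
          rw [show (1 : ℕ) + 1 = 2 by norm_num, show 1 + j' + 2 = j' + 3 by omega] at h2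
          have h1 := robbinsS_succ_succ 0 j'
          rw [show (0 : ℕ) + 1 = 1 by norm_num, show 0 + j' + 2 = j' + 2 by omega] at h1
          rw [h2, h1, robbinsS_zero_left, robbinsS_zero_left, robbinsS_one_left,
            show 2 + (j' + 1) = j' + 3 by omega]
          have hc2 : Nat.choose (j' + 2) (j' + 1) = j' + 2 := by
            rw [show j' + 2 = j' + 1 + 1 by omega]
            exact Nat.choose_succ_self_right (j' + 1)
          rw [hc2]
          have hiff : (2 = j' + 1 + 1) ↔ (j' = 0) := by omega
          simp only [hiff]
          by_cases hj : j' = 0 <;> simp [hj] <;> push_cast <;> ring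
      | succ i' =>
          have h3 := robbinsS_succ_succ (i' + 2) j'
          rw [show i' + 2 + 1 = i' + 1 + 2 by omega,
            show i' + 2 + j' + 2 = i' + j' + 4 by omega] at h3
          have h2 := robbinsS_succ_succ (i' + 1) j'
          rw [show i' + 1 + j' + 2 = i' + j' + 3 by omega] at h2
          have h1 := robbinsS_succ_succ i' j'
          rw [h3, h2, h1, show i' + 1 + 2 + (j' + 1) = i' + j' + 4 by omega]
          have hih := ih i'
          rw [show i' + 2 + j' = i' + j' + 2 by omega] at hih
          have hp : Nat.choose (i' + j' + 3) (j' + 1)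
              = Nat.choose (i' + j' + 2) j' + Nat.choose (i' + j' + 2) (j' + 1) := by
            simpa [Nat.succ_eq_add_one] using Nat.choose_succ_succ (i' + j' + 2) j'
          have hp' : (Nat.choose (i' + j' + 3) (j' + 1) : ℤ)
              = (Nat.choose (i' + j' + 2) j' : ℤ) + (Nat.choose (i' + j' + 2) (j' + 1) : ℤ) := by
            exact_mod_cast congrArg (Nat.cast : ℕ → ℤ) hp
          have hiff : (i' + 1 + 2 = j' + 1 + 1) ↔ (i' + 2 = j' + 1) := by omega
          simp only [hiff]
          linarith [hih, hp']

/-- The entries of the lower unitriangular transfer matrix `I - N + N²`. -/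
def robbinsF (i b : ℕ) : ℤ :=
  if i = b then 1 else if i = b + 1 then -1 else if i = b + 2 then 1 else 0

lemma robbins_row_sum (n i j : ℕ) (hi : i ≤ n) :
    ∑ b ∈ Finset.range (n + 1), robbinsF i b * robbinsS b j =
      (Nat.choose (i + j) j : ℤ) - (if i = j + 1 then 1 else 0) := by
  have hsplit : ∑ b ∈ Finset.range (n + 1), robbinsF i b * robbinsS b j
      = ∑ b ∈ Finset.range (i + 1), robbinsF i b * robbinsS b j := by
    refine (Finset.sum_subset ?_ ?_).symm
    · intro b hb
      simp only [Finset.mem_range] at hb ⊢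
      omega
    · intro b _ hnb
      simp only [Finset.mem_range] at hnb
      have : robbinsF i b = 0 := by
        unfold robbinsF; split_ifs <;> omega
      rw [this, zero_mul]
  rw [hsplit]
  match i with
  | 0 =>
      rw [Finset.sum_range_one]
      have f0 : robbinsF 0 0 = 1 := by simp [robbinsF]
      rw [f0, robbinsS_zero_left, if_neg (by omega : ¬ (0 : ℕ) = j + 1)]
      simp
  | 1 =>
      rw [Finset.sum_range_succ, Finset.sum_range_one]
      have f0 : robbinsF 1 0 = -1 := by simp [robbinsF]
      have f1 : robbinsF 1 1 = 1 := by simp [robbinsF]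
      rw [f0, f1, robbinsS_zero_left, robbinsS_one_left]
      have hch : Nat.choose (1 + j) j = j + 1 := by
        rw [show 1 + j = j + 1 by omega]
        exact Nat.choose_succ_self_right j
      rw [hch]
      have hiff : ((1 : ℕ) = j + 1) ↔ (j = 0) := by omega
      simp only [hiff]
      by_cases hj : j = 0 <;> simp [hj] <;> push_cast <;> ring
  | (i' + 2) =>
      rw [Finset.sum_range_succ, Finset.sum_range_succ]
      have hz : ∑ b ∈ Finset.range (i' + 1), robbinsF (i' + 2) b * robbinsS b j
          = robbinsF (i' + 2) i' * robbinsS i' j := by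
        rw [Finset.sum_range_succ]
        have : ∑ b ∈ Finset.range i', robbinsF (i' + 2) b * robbinsS b j = 0 := by
          apply Finset.sum_eq_zero
          intro b hb
          have hb' : b < i' := Finset.mem_range.mp hb
          have : robbinsF (i' + 2) b = 0 := by
            unfold robbinsF; split_ifs <;> omega
          rw [this, zero_mul]
        rw [this, zero_add]
      rw [hz]
      have f0 : robbinsF (i' + 2) i' = 1 := by
        unfold robbinsF; split_ifs <;> omega
      have f1 : robbinsF (i' + 2) (i' + 1) = -1 := by
        unfold robbinsF; split_ifs <;> omega
      have f2 : robbinsF (i' + 2) (i' + 2) = 1 := by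
        unfold robbinsF; split_ifs <;> omega
      rw [f0, f1, f2]
      have hk := robbinsS_key i' j
      rw [show i' + 2 + j = i' + j + 2 by omega] at hk
      rw [show (i' + 2) + j = i' + j + 2 by omega]
      linarith [hk]

/-- Let `M(i,j) = C(i+j, j) - δ_{i,j+1}` and
`S(i,j) = ∑_{m=0}^{min(i,j)} C(i+j-2m, i-m)` (the coefficients of `1/((1-xy)(1-x-y))`),
as `(n+1)×(n+1)` integer matrices. Then `det M = det S` for every `n`. -/
theorem robbins_determinant_transfer (n : ℕ) :
    Matrix.det (Matrix.of fun i j : Fin (n + 1) =>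
        (Nat.choose ((i : ℕ) + (j : ℕ)) (j : ℕ) : ℤ) -
          (if (i : ℕ) = (j : ℕ) + 1 then 1 else 0)) =
      Matrix.det (Matrix.of fun i j : Fin (n + 1) =>
        ∑ m ∈ Finset.range (min (i : ℕ) (j : ℕ) + 1),
          (Nat.choose ((i : ℕ) + (j : ℕ) - 2 * m) ((i : ℕ) - m) : ℤ)) := by
  set S : Matrix (Fin (n + 1)) (Fin (n + 1)) ℤ :=
    Matrix.of fun i j : Fin (n + 1) => robbinsS (i : ℕ) (j : ℕ) with hS
  set L : Matrix (Fin (n + 1)) (Fin (n + 1)) ℤ :=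
    Matrix.of fun i j : Fin (n + 1) => robbinsF (i : ℕ) (j : ℕ) with hL
  have hM : (Matrix.of fun i j : Fin (n + 1) =>
      (Nat.choose ((i : ℕ) + (j : ℕ)) (j : ℕ) : ℤ) -
        (if (i : ℕ) = (j : ℕ) + 1 then 1 else 0)) = L * S := by
    ext i j
    rw [Matrix.mul_apply]
    have h : ∑ k : Fin (n + 1), L i k * S k j
        = ∑ b ∈ Finset.range (n + 1), robbinsF (i : ℕ) b * robbinsS b (j : ℕ) := by
      rw [← Fin.sum_univ_eq_sum_range (fun b => robbinsF (i : ℕ) b * robbinsS b (j : ℕ))]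
      rfl
    rw [h, robbins_row_sum n (i : ℕ) (j : ℕ) (by omega)]
    rfl
  have hdetL : L.det = 1 := by
    have htri : L.BlockTriangular OrderDual.toDual := by
      intro i j hij
      have hij' : (i : ℕ) < (j : ℕ) := hij
      show robbinsF (i : ℕ) (j : ℕ) = 0
      unfold robbinsF; split_ifs <;> omega
    rw [Matrix.det_of_lowerTriangular L htri]
    apply Finset.prod_eq_one
    intro i _
    show robbinsF (i : ℕ) (i : ℕ) = 1
    simp [robbinsF]
  have hSeq : (Matrix.of fun i j : Fin (n + 1) =>
      ∑ m ∈ Finset.range (min (i : ℕ) (j : ℕ) + 1),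
        (Nat.choose ((i : ℕ) + (j : ℕ) - 2 * m) ((i : ℕ) - m) : ℤ)) = S := rfl
  rw [hM, hSeq, Matrix.det_mul, hdetL, one_mul]
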